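/- Let X be a pre-Riesz space with dim X = n < ∞. Then there exist at most n pairwise distinct band projections of rank 1 on X; that is, the set of rank-1 band projections on X has cardinality at most n. -/

import Mathlib

open Pointwise

variable {X : Type*} [AddCommGroup X] [PartialOrder X] [IsOrderedAddMonoid X] [Module ℝ X]
  [PosSMulStrictMono ℝ X] [PosSMulReflectLT ℝ X]

/-- Two elements of an ordered vector space are disjoint if the sets `{x+y, -x-y}` and
`{x-y, y-x}` have the same set of upper bounds. -/
def UDisjoint (x y : X) : Prop :=
  upperBounds ({x + y, -x - y} : Set X) = upperBounds ({x - y, y - x} : Set X)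

/-- The disjoint complement `S^⊥` of a set `S`. -/
def dComp (S : Set X) : Set X := {x : X | ∀ s ∈ S, UDisjoint x s}

/-- A band: a set equal to its double disjoint complement. -/
def IsBand (B : Set X) : Prop := B = dComp (dComp B)

/-- A projection band: a band `B` with `B ∩ B^⊥ = {0}` and `B + B^⊥ = X`. -/
def IsProjBand (B : Set X) : Prop :=
  IsBand B ∧ B ∩ dComp B = {0} ∧ ∀ x : X, ∃ b ∈ B, ∃ c ∈ dComp B, x = b + c

/-- A positive linear operator. -/
def IsPosMap (T : X →ₗ[ℝ] X) : Prop := ∀ x : X, 0 ≤ x → 0 ≤ T x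

/-- A band projection: a linear projection whose range is a projection band and whose
kernel is the disjoint complement of the range. -/
def IsBandProj (P : X →ₗ[ℝ] X) : Prop :=
  P ∘ₗ P = P ∧ IsProjBand (Set.range ⇑P) ∧ (LinearMap.ker P : Set X) = dComp (Set.range ⇑P)

/-- A pre-Riesz space: for every nonempty finite `A ⊆ X` and every `x`, if the upper bounds
of `x + A` are contained in the upper bounds of `A`, then `x ≥ 0`. -/
def IsPreRiesz (X : Type*) [AddCommGroup X] [PartialOrder X] [IsOrderedAddMonoid X] [Module ℝ X]
    [PosSMulStrictMono ℝ X] [PosSMulReflectLT ℝ X] : Prop :=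
  ∀ (A : Set X) (x : X), A.Finite → A.Nonempty →
    upperBounds ((x + ·) '' A) ⊆ upperBounds A → 0 ≤ x

/- ---------------- Auxiliary lemmas ---------------- -/

lemma aux_half_nonneg {a : X} (h : 0 ≤ a + a) : 0 ≤ a := by
  have h2 : (0 : X) ≤ (2 : ℝ) • a := by rw [two_smul]; exact h
  have h3 := smul_nonneg (by norm_num : (0:ℝ) ≤ (2:ℝ)⁻¹) h2
  rwa [smul_smul, inv_mul_cancel₀ (two_ne_zero), one_smul] at h3

lemma aux_udisjoint_symm {x y : X} (h : UDisjoint x y) : UDisjoint y x := by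
  unfold UDisjoint at *
  have e1 : y + x = x + y := add_comm _ _
  have e2 : -y - x = -x - y := by abel
  rw [e1, e2, Set.pair_comm (y - x) (x - y)]
  exact h

lemma aux_le_of_udisjoint {a b s : X} (h : UDisjoint a b) (h1 : a - b ≤ s) (h2 : b - a ≤ s) :
    a + b ≤ s := by
  have hs : s ∈ upperBounds ({a - b, b - a} : Set X) := by
    rintro t (rfl | rfl)
    · exact h1
    · exact h2
  unfold UDisjoint at h
  rw [← h] at hs
  exact hs (Set.mem_insert _ _)

lemma aux_nonneg_of_udisjoint_add {b c : X} (h : UDisjoint b c) (hbc : 0 ≤ b + c) :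
    0 ≤ b ∧ 0 ≤ c := by
  have hub : b + c ∈ upperBounds ({b + c, -b - c} : Set X) := by
    rintro t (rfl | rfl)
    · exact le_refl _
    · have : -(b + c) ≤ b + c := neg_le_self hbc
      calc -b - c = -(b + c) := by abel
        _ ≤ b + c := this
  unfold UDisjoint at h
  rw [h] at hub
  have h1 : b - c ≤ b + c := hub (Set.mem_insert _ _)
  have h2 : c - b ≤ b + c := hub (Set.mem_insert_of_mem _ rfl)
  constructor
  · apply aux_half_nonneg
    have := sub_nonneg.mpr h2
    calc (0 : X) ≤ (b + c) - (c - b) := this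
      _ = b + b := by abel
  · apply aux_half_nonneg
    have := sub_nonneg.mpr h1
    calc (0 : X) ≤ (b + c) - (b - c) := this
      _ = c + c := by abel

lemma aux_idem {P : X →ₗ[ℝ] X} (hP : IsBandProj P) (x : X) : P (P x) = P x := by
  have := LinearMap.ext_iff.mp hP.1 x
  simpa [LinearMap.comp_apply] using this

/-- Band projections are positive, and dominated by the identity on positives. -/
lemma aux_bandProj_pos {P : X →ₗ[ℝ] X} (hP : IsBandProj P) {x : X} (hx : 0 ≤ x) :
    0 ≤ P x ∧ P x ≤ x := by
  have hker : P (x - P x) = 0 := by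
    rw [map_sub, aux_idem hP, sub_self]
  have hmem : (x - P x) ∈ dComp (Set.range ⇑P) := by
    rw [← hP.2.2]
    simpa [SetLike.mem_coe, LinearMap.mem_ker] using hker
  have hd : UDisjoint (x - P x) (P x) := hmem (P x) ⟨x, rfl⟩
  have hd' : UDisjoint (P x) (x - P x) := aux_udisjoint_symm hd
  have hsum : 0 ≤ P x + (x - P x) := by
    have : P x + (x - P x) = x := by abel
    rw [this]; exact hx
  obtain ⟨h1, h2⟩ := aux_nonneg_of_udisjoint_add hd' hsum
  exact ⟨h1, by simpa [sub_nonneg] using h2⟩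

/-- A band projection is determined by its range. -/
lemma aux_bandProj_ext {P Q : X →ₗ[ℝ] X} (hP : IsBandProj P) (hQ : IsBandProj Q)
    (h : Set.range ⇑P = Set.range ⇑Q) : P = Q := by
  have hker : LinearMap.ker P = LinearMap.ker Q := by
    apply SetLike.ext'
    rw [hP.2.2, hQ.2.2, h]
  ext x
  have h1 : Q (P x) = P x := by
    have : P x ∈ Set.range ⇑Q := h ▸ ⟨x, rfl⟩
    obtain ⟨y, hy⟩ := this
    rw [← hy]
    exact aux_idem hQ y
  have h2 : Q (x - P x) = 0 := by
    have : x - P x ∈ LinearMap.ker P := by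
      rw [LinearMap.mem_ker, map_sub, aux_idem hP, sub_self]
    rw [hker] at this
    exact this
  have : Q x = Q (P x) + Q (x - P x) := by rw [← map_add]; congr 1; abel
  rw [this, h1, h2, add_zero]

/-- Core disjointness result: distinct rank-one band projections annihilate each other's
generators. -/
lemma aux_core {P Q : X →ₗ[ℝ] X} (hP : IsBandProj P) (hQ : IsBandProj Q) (hne : P ≠ Q)
    {u v : X} (hu0 : 0 ≤ u) (hun : u ≠ 0) (huP : P u = u)
    (hspanP : ∀ w ∈ Set.range ⇑P, ∃ t : ℝ, w = t • u)
    (hv0 : 0 ≤ v) (hvn : v ≠ 0) (hvQ : Q v = v)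
    (hspanQ : ∀ w ∈ Set.range ⇑Q, ∃ t : ℝ, w = t • v) :
    Q u = 0 := by
  obtain ⟨l, hl⟩ := hspanQ (Q u) ⟨u, rfl⟩
  obtain ⟨m, hm⟩ := hspanP (P v) ⟨v, rfl⟩
  have hQu := aux_bandProj_pos hQ hu0
  have hPv := aux_bandProj_pos hP hv0
  -- nonnegativity of the coefficients
  have hscal : ∀ (c : ℝ) (w : X), 0 ≤ w → w ≠ 0 → 0 ≤ c • w → 0 ≤ c := by
    intro c w hw hwn hcw
    by_contra hc
    push_neg at hc
    have h1 : (0:ℝ) ≤ -c⁻¹ := by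
      have : c⁻¹ ≤ 0 := inv_nonpos.mpr (le_of_lt hc)
      linarith
    have h2 := smul_nonneg h1 hcw
    rw [smul_smul] at h2
    have h3 : -c⁻¹ * c = -1 := by rw [neg_mul, inv_mul_cancel₀ (ne_of_lt hc)]
    rw [h3, neg_one_smul] at h2
    have : w = 0 := le_antisymm (by simpa using h2) hw
    exact hwn this
  have hl0 : 0 ≤ l := hscal l v hv0 hvn (hl ▸ hQu.1)
  have hm0 : 0 ≤ m := hscal m u hu0 hun (hm ▸ hPv.1)
  by_cases hlz : l = 0
  · rw [hl, hlz, zero_smul]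
  exfalso
  have hlpos : 0 < l := lt_of_le_of_ne hl0 (Ne.symm hlz)
  have hulv : 0 ≤ u - l • v := by rw [← hl]; exact sub_nonneg.mpr hQu.2
  by_cases hmz : m = 0
  · -- l > 0, m = 0 is impossible
    have hker : (l • v) ∈ dComp (Set.range ⇑P) := by
      rw [← hP.2.2]
      have : P (l • v) = 0 := by rw [map_smul, hm, hmz, zero_smul, smul_zero]
      simpa [SetLike.mem_coe, LinearMap.mem_ker] using this
    have hd : UDisjoint u (l • v) := aux_udisjoint_symm (hker u ⟨u, huP⟩)
    have h2 : l • v - u ≤ u - l • v := by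
      have h0 : (0:X) ≤ (u - l • v) + (u - l • v) := add_nonneg hulv hulv
      have : (u - l • v) - (l • v - u) = (u - l • v) + (u - l • v) := by abel
      rw [← sub_nonneg, this]
      exact h0
    have hle := aux_le_of_udisjoint hd (le_refl (u - l • v)) h2
    -- u + l•v ≤ u - l•v  ⟹  l•v ≤ 0
    have hlv : l • v ≤ 0 := by
      apply neg_nonneg.mp
      apply aux_half_nonneg
      have := sub_nonneg.mpr hle
      calc (0:X) ≤ (u - l • v) - (u + l • v) := this
        _ = -(l • v) + -(l • v) := by abel
    have hlvpos : 0 ≤ l • v := smul_nonneg hl0 hv0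
    have : l • v = 0 := le_antisymm hlv hlvpos
    rw [smul_eq_zero] at this
    rcases this with h | h
    · exact hlz h
    · exact hvn h
  · -- l > 0, m > 0
    have hmpos : 0 < m := lt_of_le_of_ne hm0 (Ne.symm hmz)
    set α := l * m with hα
    have hαpos : 0 < α := mul_pos hlpos hmpos
    have hPlv : P (l • v) = α • u := by
      rw [map_smul, hm, smul_smul]
    have hker : (l • v - α • u) ∈ dComp (Set.range ⇑P) := by
      rw [← hP.2.2]
      have : P (l • v - α • u) = 0 := by
        rw [map_sub, hPlv, map_smul, huP, sub_self]
      simpa [SetLike.mem_coe, LinearMap.mem_ker] using this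
    have hd : UDisjoint (l • v - α • u) u := hker u ⟨u, huP⟩
    have ha0 : 0 ≤ l • v - α • u := by
      have h1 : 0 ≤ v - m • u := by rw [← hm]; exact sub_nonneg.mpr hPv.2
      have h2 := smul_nonneg hl0 h1
      have h3 : l • (v - m • u) = l • v - α • u := by
        rw [smul_sub, smul_smul, hα]
      rwa [h3] at h2
    -- apply disjointness with s = (1+α)•u - l•v
    set s : X := (1 + α) • u - l • v with hs
    have h1 : (l • v - α • u) - u ≤ s := by
      rw [← sub_nonneg]
      have hiden : s - ((l • v - α • u) - u) = (2:ℝ) • (u - l • v) + (2 * α) • u := by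
        rw [hs]; module
      rw [hiden]
      exact add_nonneg (smul_nonneg (by norm_num) hulv)
        (smul_nonneg (by positivity) hu0)
    have h2 : u - (l • v - α • u) ≤ s := by
      apply le_of_eq
      rw [hs]; module
    have hle := aux_le_of_udisjoint hd h1 h2
    -- (l•v - α•u) + u ≤ (1+α)•u - l•v  ⟹  α•u - l•v ≥ 0
    have hb : 0 ≤ α • u - l • v := by
      apply aux_half_nonneg
      have h3 := sub_nonneg.mpr hle
      have hiden : s - ((l • v - α • u) + u) = (α • u - l • v) + (α • u - l • v) := by
        rw [hs]; module
      rwa [hiden] at h3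
    have heq : l • v = α • u := le_antisymm (sub_nonneg.mp hb) (sub_nonneg.mp ha0)
    -- ranges coincide, hence P = Q, contradiction
    have huv : u = (α⁻¹ * l) • v := by
      rw [mul_smul, heq, smul_smul, inv_mul_cancel₀ (ne_of_gt hαpos), one_smul]
    have hvu : v = (l⁻¹ * α) • u := by
      rw [mul_smul, ← heq, smul_smul, inv_mul_cancel₀ (ne_of_gt hlpos), one_smul]
    have hrange : Set.range ⇑P = Set.range ⇑Q := by
      ext w
      constructor
      · intro hw
        obtain ⟨t, rfl⟩ := hspanP w hw
        refine ⟨(t * (α⁻¹ * l)) • v, ?_⟩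
        rw [map_smul, hvQ, mul_smul, ← huv]
      · intro hw
        obtain ⟨t, rfl⟩ := hspanQ w hw
        refine ⟨(t * (l⁻¹ * α)) • u, ?_⟩
        rw [map_smul, huP, mul_smul, ← hvu]
    exact hne (aux_bandProj_ext hP hQ hrange)

/-- A pre-Riesz space with some non-positive element is directed upwards over `0`. -/
lemma aux_directed (hX : IsPreRiesz X) (hw : ∃ w : X, ¬ 0 ≤ w) (x : X) :
    ∃ z, x ≤ z ∧ 0 ≤ z := by
  by_contra h
  push_neg at h
  obtain ⟨w, hw⟩ := hw
  apply hw
  apply hX {x, 0} w (Set.toFinite _) ⟨x, by simp⟩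
  intro s hs
  exfalso
  have h1 : w + x ≤ s := hs ⟨x, by simp, rfl⟩
  have h2 : w + 0 ≤ s := hs ⟨0, by simp, rfl⟩
  have hx1 : x ≤ s - w := by rwa [le_sub_iff_add_le, add_comm]
  have hx2 : 0 ≤ s - w := by
    rw [add_zero] at h2
    exact sub_nonneg.mpr h2
  exact h (s - w) hx1 hx2

/-- Existence of a positive generator for a rank-one band projection. -/
lemma aux_gen (hdir : ∀ x : X, ∃ z, x ≤ z ∧ 0 ≤ z) [FiniteDimensional ℝ X]
    {P : X →ₗ[ℝ] X} (hP : IsBandProj P) (hr : Module.finrank ℝ (LinearMap.range P) = 1) :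
    ∃ u : X, 0 ≤ u ∧ u ≠ 0 ∧ P u = u ∧ ∀ w ∈ Set.range ⇑P, ∃ t : ℝ, w = t • u := by
  -- find x with P x ≠ 0
  have hP0 : ∃ x, P x ≠ 0 := by
    by_contra h
    push_neg at h
    have : LinearMap.range P = ⊥ := by
      rw [LinearMap.range_eq_bot]
      exact LinearMap.ext h
    rw [this] at hr
    simp at hr
  obtain ⟨x, hx⟩ := hP0
  obtain ⟨z, hxz, hz0⟩ := hdir x
  have hz' : 0 ≤ z - x := sub_nonneg.mpr hxz
  have hcases : P z ≠ 0 ∨ P (z - x) ≠ 0 := by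
    by_contra h
    push_neg at h
    apply hx
    have : P x = P z - P (z - x) := by rw [← map_sub]; congr 1; abel
    rw [this, h.1, h.2, sub_self]
  -- common construction from y ≥ 0 with P y ≠ 0
  have hbuild : ∀ y : X, 0 ≤ y → P y ≠ 0 →
      ∃ u : X, 0 ≤ u ∧ u ≠ 0 ∧ P u = u ∧ ∀ w ∈ Set.range ⇑P, ∃ t : ℝ, w = t • u := by
    intro y hy hPy
    refine ⟨P y, (aux_bandProj_pos hP hy).1, hPy, aux_idem hP y, ?_⟩
    have hmem : P y ∈ LinearMap.range P := ⟨y, rfl⟩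
    have hle : Submodule.span ℝ {P y} ≤ LinearMap.range P := by
      rw [Submodule.span_le, Set.singleton_subset_iff]
      exact hmem
    have hspan : Submodule.span ℝ {P y} = LinearMap.range P := by
      apply Submodule.eq_of_le_of_finrank_le hle
      rw [hr, finrank_span_singleton hPy]
    intro w hw
    have : w ∈ Submodule.span ℝ {P y} := by
      rw [hspan]
      obtain ⟨a, ha⟩ := hw
      exact ⟨a, ha⟩
    obtain ⟨t, ht⟩ := Submodule.mem_span_singleton.mp this
    exact ⟨t, ht.symm⟩
  rcases hcases with h | h
  · exact hbuild z hz0 h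
  · exact hbuild (z - x) hz' h

/-- An `n`-dimensional pre-Riesz space admits at most `n` distinct rank-one band
projections. -/
theorem stmt_17 (hX : IsPreRiesz X) [FiniteDimensional ℝ X] :
    {P : X →ₗ[ℝ] X | IsBandProj P ∧ Module.finrank ℝ (LinearMap.range P) = 1}.Finite ∧
    {P : X →ₗ[ℝ] X | IsBandProj P ∧ Module.finrank ℝ (LinearMap.range P) = 1}.ncard
      ≤ Module.finrank ℝ X := by
  set S := {P : X →ₗ[ℝ] X | IsBandProj P ∧ Module.finrank ℝ (LinearMap.range P) = 1} with hS
  rcases Set.eq_empty_or_nonempty S with hE | hNE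
  · rw [hE]
    simp
  · -- X contains some non-positive element
    obtain ⟨P₀, hP₀⟩ := hNE
    have hw : ∃ w : X, ¬ 0 ≤ w := by
      by_contra h
      push_neg at h
      have hzero : ∀ w : X, w = 0 := by
        intro w
        have h1 := h w
        have h2 := h (-w)
        have : w ≤ 0 := by simpa using neg_nonneg.mp h2
        exact le_antisymm this h1
      have hbot : LinearMap.range P₀ = ⊥ := by
        rw [LinearMap.range_eq_bot]
        exact LinearMap.ext fun x => hzero _
      have h1 : Module.finrank ℝ (LinearMap.range P₀) = 1 := hP₀.2
      rw [hbot] at h1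
      simp at h1
    have hdir := aux_directed hX hw
    -- choose generators
    have hgen : ∀ P : ↥S, ∃ u : X, 0 ≤ u ∧ u ≠ 0 ∧ (P : X →ₗ[ℝ] X) u = u ∧
        ∀ w ∈ Set.range ⇑(P : X →ₗ[ℝ] X), ∃ t : ℝ, w = t • u :=
      fun P => aux_gen hdir P.2.1 P.2.2
    choose u h0 hn hfix hspan using hgen
    have hli : LinearIndependent ℝ u := by
      rw [linearIndependent_iff']
      intro s g hsum i hi
      have happ : (i : X →ₗ[ℝ] X) (∑ j ∈ s, g j • u j) = 0 := by rw [hsum, map_zero]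
      rw [map_sum] at happ
      have hz : ∀ j ∈ s, j ≠ i → (i : X →ₗ[ℝ] X) (g j • u j) = 0 := by
        intro j hj hji
        have hcoene : (j : X →ₗ[ℝ] X) ≠ (i : X →ₗ[ℝ] X) := fun h => hji (Subtype.coe_injective h)
        have := aux_core j.2.1 i.2.1 hcoene (h0 j) (hn j) (hfix j) (hspan j)
          (h0 i) (hn i) (hfix i) (hspan i)
        rw [map_smul, this, smul_zero]
      have hsingle := Finset.sum_eq_single_of_mem i hi hz
      rw [hsingle] at happ
      rw [map_smul, hfix i] at happ
      rcases smul_eq_zero.mp happ with h | h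
      · exact h
      · exact absurd h (hn i)
    have hfinS : Finite ↥S := hli.finite
    have hfin : S.Finite := Set.finite_coe_iff.mp hfinS
    refine ⟨hfin, ?_⟩
    haveI := hfin.fintype
    have hcard : S.ncard = Fintype.card ↥S := by
      rw [← Nat.card_coe_set_eq, Nat.card_eq_fintype_card]
    rw [hcard]
    exact hli.fintype_card_le_finrank
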